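/- arXiv:1312.5012 — 3 statements merged into one kernel-verified Lean document; each statement's English description precedes it below -/
import Mathlib

section
/- If M1 = (E, U1) and M2 = (E, U2) are represented matroids over a field F on the same ground set E, and M2 is obtained from M1 by a single elementary projection (i.e., there is a represented matroid M on E ∪ {e} with M1 = M\e and M2 = M/e), then M2 is a rank-(≤1) perturbation of M1; that is, there exist generator matrices A1 for M1 and A2 for M2 with the same row index set such that rank(A1 − A2) ≤ 1. -/
/-- The restriction (deletion) map `F^(E ∪ {e}) → F^E`, where the extra
element `e` is modelled as `none : Option E`. -/
noncomputable def restrictMap (F : Type*) [Field F] (E : Type*) :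
    (Option E → F) →ₗ[F] (E → F) :=
  LinearMap.funLeft F F some

/-- Deletion of the element `e = none` from a represented matroid `(E ∪ {e}, W)`. -/
noncomputable def delE {F E : Type*} [Field F] (W : Submodule F (Option E → F)) :
    Submodule F (E → F) :=
  W.map (restrictMap F E)

/-- Contraction of the element `e = none` from a represented matroid `(E ∪ {e}, W)`. -/
noncomputable def conE {F E : Type*} [Field F] (W : Submodule F (Option E → F)) :
    Submodule F (E → F) :=
  (W ⊓ LinearMap.ker (LinearMap.proj (R := F) (φ := fun _ : Option E => F) none)).map
    (restrictMap F E)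

/-- If `M₂ = (E, U₂)` is an elementary projection of `M₁ = (E, U₁)`,
witnessed by a represented matroid `W` on `E ∪ {e}` with `U₁ = W \ e` and `U₂ = W / e`,
then `M₂` is a rank-(≤ 1) perturbation of `M₁`: there are generator matrices `A₁` of `U₁`
and `A₂` of `U₂` with a common row index set such that `rank (A₁ - A₂) ≤ 1`. -/
theorem stmt0 {F E : Type*} [Field F] [Fintype E]
    (U1 U2 : Submodule F (E → F)) (W : Submodule F (Option E → F))
    (hdel : U1 = delE W) (hcon : U2 = conE W) :
    ∃ (R : Type) (_ : Fintype R) (A1 A2 : Matrix R E F),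
      Submodule.span F (Set.range A1) = U1 ∧
      Submodule.span F (Set.range A2) = U2 ∧
      (A1 - A2).rank ≤ 1 := by
  classical
  set n := Module.finrank F W with hn
  let b : Module.Basis (Fin n) F W := Module.finBasis F W
  have hWspan : Submodule.span F (Set.range fun r => (b r : Option E → F)) = W := by
    rw [show (fun r => (b r : Option E → F)) = W.subtype ∘ b from rfl,
      Set.range_comp, ← Submodule.map_span, b.span_eq, Submodule.map_top,
      Submodule.range_subtype]
  have hspan : ∀ (f : Fin n → (Option E → F)) (S : Submodule F (Option E → F)),
      Submodule.span F (Set.range f) = S →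
      Submodule.span F (Set.range fun r => (fun e => f r (some e) : E → F)) =
        S.map (restrictMap F E) := by
    intro f S hS
    rw [show (fun r => (fun e => f r (some e) : E → F)) = (restrictMap F E) ∘ f from rfl,
      Set.range_comp, ← Submodule.map_span, hS]
  by_cases hk : ∀ w ∈ W, w none = 0
  · have hle : W ≤ LinearMap.ker (LinearMap.proj (R := F) (φ := fun _ : Option E => F) none) := by
      intro w hw
      simpa [LinearMap.mem_ker] using hk w hw
    have hWU : conE W = delE W := by
      unfold conE delE
      rw [inf_eq_left.mpr hle]
    refine ⟨Fin n, inferInstance, (fun r e => (b r : Option E → F) (some e)), (fun r e => (b r : Option E → F) (some e)),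
      ?_, ?_, ?_⟩
    · rw [hspan _ W hWspan, hdel]; rfl
    · rw [hspan _ W hWspan, hcon, hWU]; rfl
    · have h0 : ((fun r e => (b r : Option E → F) (some e)) - (fun r e => (b r : Option E → F) (some e)) : Matrix (Fin n) E F) = 0 := sub_self _
      refine (congrArg Matrix.rank h0).le.trans ?_
      exact Matrix.rank_zero.le.trans zero_le_one
  · push_neg at hk
    obtain ⟨w, hwW, hw0⟩ := hk
    set w0 : Option E → F := (w none)⁻¹ • w with hw0def
    have hw0W : w0 ∈ W := W.smul_mem _ hwW
    have hw0none : w0 none = 1 := by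
      simp [hw0def, inv_mul_cancel₀ hw0]
    set L : (Option E → F) →ₗ[F] (Option E → F) :=
      LinearMap.id - (LinearMap.proj (R := F) (φ := fun _ : Option E => F) none).smulRight w0
      with hL
    have hLapp : ∀ v, L v = v - (v none) • w0 := fun v => rfl
    have hmapL : W.map L = W ⊓ LinearMap.ker
        (LinearMap.proj (R := F) (φ := fun _ : Option E => F) none) := by
      apply le_antisymm
      · rintro _ ⟨v, hv, rfl⟩
        refine ⟨W.sub_mem hv (W.smul_mem _ hw0W), ?_⟩
        simp [LinearMap.mem_ker, hLapp, hw0none]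
      · rintro u ⟨huW, hu0⟩
        refine ⟨u, huW, ?_⟩
        have : u none = 0 := by simpa [LinearMap.mem_ker] using hu0
        simp [hLapp, this]
    refine ⟨Fin n, inferInstance, (fun r e => (b r : Option E → F) (some e)),
      (fun r e => L (b r : Option E → F) (some e)), ?_, ?_, ?_⟩
    · rw [hspan _ W hWspan, hdel]; rfl
    · have hspanL : Submodule.span F (Set.range fun r => L (b r : Option E → F)) =
          W ⊓ LinearMap.ker (LinearMap.proj (R := F) (φ := fun _ : Option E => F) none) := by
        rw [show (fun r => L (b r : Option E → F)) = L ∘ (fun r => (b r : Option E → F)) from rfl,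
          Set.range_comp, ← Submodule.map_span, hWspan, hmapL]
      rw [hspan _ _ hspanL, hcon]; rfl
    · have heq : ((fun r e => (b r : Option E → F) (some e)) - (fun r e => L (b r : Option E → F) (some e)) : Matrix (Fin n) E F)
          = Matrix.of (fun r (_ : Fin 1) => (b r : Option E → F) none) *
            Matrix.of (fun (_ : Fin 1) e => w0 (some e)) := by
        ext r e
        simp [Matrix.mul_apply, hLapp, Matrix.sub_apply]
      refine (congrArg Matrix.rank heq).le.trans ?_
      calc (Matrix.of (fun r (_ : Fin 1) => (b r : Option E → F) none) *
            Matrix.of (fun (_ : Fin 1) e => w0 (some e))).rank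
          ≤ (Matrix.of (fun (_ : Fin 1) e => w0 (some e))).rank := Matrix.rank_mul_le_right _ _
        _ ≤ Fintype.card (Fin 1) := Matrix.rank_le_card_height _
        _ = 1 := Fintype.card_fin 1
end

section
/- For F-represented matroids M1 and M2 on the same ground set, pert(M1, M2) ≤ dist(M1, M2), where dist(M1, M2) is the minimum number of elementary lifts and elementary projections needed to transform M1 into M2, and pert(M1, M2) is the minimum t such that M2 is a rank-(≤t) perturbation of M1. -/
/-- `M₂` is obtained from `M₁` by a single elementary projection or elementary lift. -/
def ElemStep {F E : Type*} [Field F] (M1 M2 : Submodule F (E → F)) : Prop :=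
  ∃ W : Submodule F (Option E → F),
    (M1 = delE W ∧ M2 = conE W) ∨ (M2 = delE W ∧ M1 = conE W)

section Aux

variable {F : Type*} [Field F]

lemma span_range_fromRows {m m' n : Type*} (A : Matrix m n F) (B : Matrix m' n F) :
    Submodule.span F (Set.range (Matrix.fromRows A B)) =
      Submodule.span F (Set.range A) ⊔ Submodule.span F (Set.range B) := by
  rw [show Set.range (Matrix.fromRows A B) = Set.range A ∪ Set.range B from
    Set.Sum.elim_range A B, Submodule.span_union]

lemma matrix_rank_add_le {m n : Type*} [Fintype n] [Fintype m] (A B : Matrix m n F) :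
    (A + B).rank ≤ A.rank + B.rank := by
  classical
  have hle : LinearMap.range (A + B).mulVecLin ≤
      LinearMap.range A.mulVecLin ⊔ LinearMap.range B.mulVecLin := by
    rw [Matrix.mulVecLin_add]
    rintro x ⟨v, rfl⟩
    exact Submodule.mem_sup.mpr ⟨A.mulVecLin v, ⟨v, rfl⟩, B.mulVecLin v, ⟨v, rfl⟩, rfl⟩
  calc (A + B).rank
      ≤ Module.finrank F
        ((LinearMap.range A.mulVecLin ⊔ LinearMap.range B.mulVecLin : Submodule F (m → F))) :=
        Submodule.finrank_mono hle
    _ ≤ A.rank + B.rank :=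
        Submodule.finrank_add_le_finrank_add_finrank _ _

lemma rank_fromRows_le {m m' n : Type*} [Fintype m] [Fintype m'] [Fintype n]
    (A : Matrix m n F) (B : Matrix m' n F) :
    (Matrix.fromRows A B).rank ≤ A.rank + B.rank := by
  classical
  have hsum : Matrix.fromRows A B =
      Matrix.fromRows A (0 : Matrix m' n F) + Matrix.fromRows (0 : Matrix m n F) B := by
    ext (i | i) j <;> simp [Matrix.fromRows_apply_inl, Matrix.fromRows_apply_inr]
  have hA : Matrix.fromRows A (0 : Matrix m' n F)
      = Matrix.fromRows (1 : Matrix m m F) (0 : Matrix m' m F) * A := by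
    rw [Matrix.fromRows_mul, Matrix.one_mul, Matrix.zero_mul]
  have hB : Matrix.fromRows (0 : Matrix m n F) B
      = Matrix.fromRows (0 : Matrix m m' F) (1 : Matrix m' m' F) * B := by
    rw [Matrix.fromRows_mul, Matrix.one_mul, Matrix.zero_mul]
  rw [hsum]
  refine (matrix_rank_add_le _ _).trans (add_le_add ?_ ?_)
  · rw [hA]; exact Matrix.rank_mul_le_right _ _
  · rw [hB]; exact Matrix.rank_mul_le_right _ _

lemma fromRows_sub {m m' n : Type*} (A C : Matrix m n F) (B D : Matrix m' n F) :
    Matrix.fromRows A B - Matrix.fromRows C D = Matrix.fromRows (A - C) (B - D) := by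
  ext (i | i) j <;> simp [Matrix.fromRows_apply_inl, Matrix.fromRows_apply_inr]

lemma exists_factor {R S n : Type*} [Fintype S] (A : Matrix R n F) (B : Matrix S n F)
    (h : Submodule.span F (Set.range A) ≤ Submodule.span F (Set.range B)) :
    ∃ P : Matrix R S F, A = P * B := by
  choose c hc using fun i =>
    (Submodule.mem_span_range_iff_exists_fun F).mp (h (Submodule.subset_span ⟨i, rfl⟩))
  refine ⟨Matrix.of c, ?_⟩
  ext i j
  rw [Matrix.mul_apply]
  have := congrFun (hc i) j
  simpa [Finset.sum_apply] using this.symm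

lemma span_range_mul_le {R S n : Type*} [Fintype S] (P : Matrix R S F) (B : Matrix S n F) :
    Submodule.span F (Set.range (P * B)) ≤ Submodule.span F (Set.range B) := by
  rw [Submodule.span_le]
  rintro _ ⟨i, rfl⟩
  have h : (P * B) i = ∑ j, P i j • B j := by
    ext k; simp [Matrix.mul_apply, Finset.sum_apply]
  rw [h]
  exact Submodule.sum_mem _ fun j _ => Submodule.smul_mem _ _ (Submodule.subset_span ⟨j, rfl⟩)

lemma exists_gen {n : Type*} [Fintype n] (M : Submodule F (n → F)) :
    ∃ (d : ℕ) (A : Matrix (Fin d) n F), Submodule.span F (Set.range A) = M := by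
  classical
  let b := Module.finBasis F M
  refine ⟨Module.finrank F M, Matrix.of (fun i => (b i : n → F)), ?_⟩
  have h1 : Set.range (fun i => ((b i : M) : n → F)) = M.subtype '' Set.range ⇑b := by
    rw [← Set.range_comp]; rfl
  show Submodule.span F (Set.range (fun i => ((b i : M) : n → F))) = M
  rw [h1, Submodule.span_image, Module.Basis.span_eq, Submodule.map_subtype_top]

lemma rank_rowv_le_one {n : Type*} [Fintype n] (X : Matrix Unit n F) : X.rank ≤ 1 := by
  simpa using X.rank_le_card_height

variable {E : Type*}

lemma del_eq_con_sup (W : Submodule F (Option E → F)) :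
    ∃ v, delE W = conE W ⊔ Submodule.span F {v} := by
  classical
  by_cases hW : ∀ w ∈ W, w none = 0
  · refine ⟨0, ?_⟩
    rw [Submodule.span_zero_singleton, sup_bot_eq]
    unfold delE conE
    congr 1
    exact (inf_eq_left.mpr fun w hw => by
      simpa [LinearMap.mem_ker] using hW w hw).symm
  · push_neg at hW
    obtain ⟨w0, hw0W, hw0⟩ := hW
    set u : Option E → F := (w0 none)⁻¹ • w0 with hu
    have huW : u ∈ W := W.smul_mem _ hw0W
    have hunone : u none = 1 := by
      simp [hu, inv_mul_cancel₀ hw0]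
    refine ⟨restrictMap F E u, le_antisymm ?_ (sup_le ?_ ?_)⟩
    · rintro _ ⟨w, hw, rfl⟩
      have hw' : w - (w none) • u ∈ W := W.sub_mem hw (W.smul_mem _ huW)
      have hker : w - (w none) • u ∈
          LinearMap.ker (LinearMap.proj (R := F) (φ := fun _ : Option E => F) none) := by
        simp [LinearMap.mem_ker, hunone]
      refine Submodule.mem_sup.mpr ⟨restrictMap F E (w - (w none) • u),
        ⟨w - (w none) • u, ⟨hw', hker⟩, rfl⟩,
        (w none) • restrictMap F E u,
        Submodule.smul_mem _ _ (Submodule.mem_span_singleton_self _), ?_⟩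
      rw [← map_smul, ← map_add]
      congr 1
      abel
    · exact Submodule.map_mono inf_le_left
    · rw [Submodule.span_singleton_le_iff_mem]
      exact ⟨u, huW, rfl⟩

lemma elemStep_exists {M1 M2 : Submodule F (E → F)} (h : ElemStep M1 M2) :
    ∃ v : E → F, M1 = M2 ⊔ Submodule.span F {v} ∨ M2 = M1 ⊔ Submodule.span F {v} := by
  obtain ⟨W, h | h⟩ := h
  · obtain ⟨v, hv⟩ := del_eq_con_sup W
    exact ⟨v, Or.inl (by rw [h.1, h.2, hv])⟩
  · obtain ⟨v, hv⟩ := del_eq_con_sup W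
    exact ⟨v, Or.inr (by rw [h.1, h.2, hv])⟩

variable [Fintype E]

lemma step_extend {R : Type} [Fintype R] {M1 Mk Mk1 : Submodule F (E → F)}
    (A1 A2 : Matrix R E F) (h1 : Submodule.span F (Set.range A1) = M1)
    (h2 : Submodule.span F (Set.range A2) = Mk)
    (hs : ElemStep Mk Mk1) {k : ℕ} (hr : (A1 - A2).rank ≤ k) :
    ∃ (R' : Type) (_ : Fintype R') (C1 C2 : Matrix R' E F),
      Submodule.span F (Set.range C1) = M1 ∧ Submodule.span F (Set.range C2) = Mk1 ∧
      (C1 - C2).rank ≤ k + 1 := by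
  classical
  obtain ⟨v, hv | hv⟩ := elemStep_exists hs
  · -- Mk = Mk1 ⊔ span {v} : projection-type step
    obtain ⟨d, B, hB⟩ := exists_gen (F := F) Mk1
    set rv : Matrix Unit E F := Matrix.of (fun _ => v) with hrv
    have hrange_rv : Set.range rv = {v} := Set.range_const
    set B2 : Matrix (Fin d ⊕ Unit) E F := Matrix.fromRows B rv with hB2
    set B3 : Matrix (Fin d ⊕ Unit) E F := Matrix.fromRows B 0 with hB3
    have hspanB2 : Submodule.span F (Set.range B2) = Mk := by
      rw [hB2, span_range_fromRows, hB, hrange_rv, ← hv]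
    have hspanB3 : Submodule.span F (Set.range B3) = Mk1 := by
      rw [hB3, span_range_fromRows, hB]
      simp
      exact Submodule.span_le.mpr (by rintro _ ⟨_, rfl⟩; exact Submodule.zero_mem _)
    obtain ⟨P, hP⟩ := exists_factor A2 B2 (by rw [h2, hspanB2])
    obtain ⟨Q, hQ⟩ := exists_factor B2 A2 (by rw [h2, hspanB2])
    refine ⟨R ⊕ (Fin d ⊕ Unit), inferInstance,
      Matrix.fromRows A1 (Q * A1), Matrix.fromRows (P * B3) B3, ?_, ?_, ?_⟩
    · rw [span_range_fromRows, h1, sup_eq_left]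
      rw [← h1]; exact span_range_mul_le _ _
    · rw [span_range_fromRows, hspanB3, sup_eq_right]
      rw [← hspanB3]; exact span_range_mul_le _ _
    · have key : Matrix.fromRows A1 (Q * A1) - Matrix.fromRows (P * B3) B3 =
          (Matrix.fromRows A1 (Q * A1) - Matrix.fromRows A2 B2) +
          (Matrix.fromRows A2 B2 - Matrix.fromRows (P * B3) B3) := by
        rw [sub_add_sub_cancel]
      rw [key]
      refine (matrix_rank_add_le _ _).trans (add_le_add ?_ ?_)
      · have e1 : Matrix.fromRows A1 (Q * A1) - Matrix.fromRows A2 B2 =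
            Matrix.fromRows (1 : Matrix R R F) Q * (A1 - A2) := by
          rw [Matrix.fromRows_mul, Matrix.one_mul, Matrix.mul_sub, ← hQ, fromRows_sub]
        rw [e1]
        exact (Matrix.rank_mul_le_right _ _).trans hr
      · have e2 : Matrix.fromRows A2 B2 - Matrix.fromRows (P * B3) B3 =
            Matrix.fromRows P (1 : Matrix (Fin d ⊕ Unit) (Fin d ⊕ Unit) F) * (B2 - B3) := by
          rw [Matrix.fromRows_mul, Matrix.one_mul, Matrix.mul_sub, ← hP, fromRows_sub]
        rw [e2]
        refine (Matrix.rank_mul_le_right _ _).trans ?_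
        have e3 : B2 - B3 = Matrix.fromRows (0 : Matrix (Fin d) E F) rv := by
          rw [hB2, hB3, fromRows_sub, sub_zero, sub_self]
        rw [e3]
        refine (rank_fromRows_le _ _).trans ?_
        rw [Matrix.rank_zero, zero_add]
        exact (rank_rowv_le_one rv).trans (by omega)
  · -- Mk1 = Mk ⊔ span {v} : lift-type step
    set rv : Matrix Unit E F := Matrix.of (fun _ => v) with hrv
    have hrange_rv : Set.range rv = {v} := Set.range_const
    refine ⟨R ⊕ Unit, inferInstance, Matrix.fromRows A1 0, Matrix.fromRows A2 rv, ?_, ?_, ?_⟩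
    · rw [span_range_fromRows, h1]
      simp
      exact Submodule.span_le.mpr (by rintro _ ⟨_, rfl⟩; exact Submodule.zero_mem _)
    · rw [span_range_fromRows, h2, hrange_rv, ← hv]
    · rw [fromRows_sub]
      refine (rank_fromRows_le _ _).trans (add_le_add hr ?_)
      exact rank_rowv_le_one _

end Aux

/-- `pert(M₁, M₂) ≤ dist(M₁, M₂)`: if `M₁` can be transformed into `M₂`
by a sequence of `n` elementary lifts and elementary projections, then `M₂` is a
rank-(≤ n) perturbation of `M₁`, i.e. there are generator matrices `A₁` of `M₁` and `A₂`
of `M₂` with a common row index set such that `rank (A₁ - A₂) ≤ n`. -/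
theorem stmt1 {F E : Type*} [Field F] [Fintype E]
    (M1 M2 : Submodule F (E → F)) (n : ℕ)
    (f : Fin (n + 1) → Submodule F (E → F))
    (h0 : f 0 = M1) (hn : f (Fin.last n) = M2)
    (hstep : ∀ i : Fin n, ElemStep (f i.castSucc) (f i.succ)) :
    ∃ (R : Type) (_ : Fintype R) (A1 A2 : Matrix R E F),
      Submodule.span F (Set.range A1) = M1 ∧
      Submodule.span F (Set.range A2) = M2 ∧
      (A1 - A2).rank ≤ n := by
  subst h0 hn
  induction n with
  | zero =>
    obtain ⟨d, A, hA⟩ := exists_gen (F := F) (f 0)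
    exact ⟨Fin d, inferInstance, A, A, hA, by simpa using hA, by simp⟩
  | succ n ih =>
    obtain ⟨R, hR, A1, A2, hA1, hA2, hrank⟩ := ih (fun j => f j.castSucc)
      (fun i => by
        have h := hstep i.castSucc
        rwa [Fin.succ_castSucc] at h)
    have hlast : ElemStep (f (Fin.last n).castSucc) (f (Fin.last (n + 1))) := by
      have h := hstep (Fin.last n)
      rwa [Fin.succ_last] at h
    exact step_extend A1 A2 hA1 hA2 hlast hrank
end

section
/- For F-represented matroids M1 and M2 on the same ground set, dist(M1, M2) ≤ 2·pert(M1, M2): if M2 is a rank-(≤t) perturbation of M1, then M1 can be transformed into M2 by at most 2t elementary lifts and projections. -/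
section Aux

variable {F E : Type*} [Field F]

lemma ElemStep.symm {M1 M2 : Submodule F (E → F)} (h : ElemStep M1 M2) : ElemStep M2 M1 := by
  obtain ⟨W, h | h⟩ := h
  exacts [⟨W, Or.inr h⟩, ⟨W, Or.inl h⟩]

/-- The embedding map putting `φ v` at `none`. -/
noncomputable def embMap (φ : (E → F) →ₗ[F] F) : (E → F) →ₗ[F] (Option E → F) where
  toFun v o := Option.elim o (φ v) v
  map_add' u v := by funext o; cases o <;> simp
  map_smul' c v := by funext o; cases o <;> simp

@[simp] lemma embMap_none (φ : (E → F) →ₗ[F] F) (v : E → F) : embMap φ v none = φ v := rfl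

lemma restrict_comp_emb (φ : (E → F) →ₗ[F] F) :
    (restrictMap F E).comp (embMap φ) = LinearMap.id := by
  ext v e <;> rfl

lemma elemStep_of_phi (U V : Submodule F (E → F)) (φ : (E → F) →ₗ[F] F)
    (h : V ⊓ LinearMap.ker φ = U) : ElemStep V U := by
  refine ⟨V.map (embMap φ), Or.inl ⟨?_, ?_⟩⟩
  · rw [delE, ← Submodule.map_comp, restrict_comp_emb, Submodule.map_id]
  · have hW : (V.map (embMap φ)) ⊓
        LinearMap.ker (LinearMap.proj (R := F) (φ := fun _ : Option E => F) none)
        = (V ⊓ LinearMap.ker φ).map (embMap φ) := by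
      ext w
      simp only [Submodule.mem_inf, Submodule.mem_map, LinearMap.mem_ker, LinearMap.proj_apply]
      constructor
      · rintro ⟨⟨v, hv, rfl⟩, h0⟩
        exact ⟨v, ⟨hv, by simpa using h0⟩, rfl⟩
      · rintro ⟨v, ⟨hv, hv0⟩, rfl⟩
        exact ⟨⟨v, hv, rfl⟩, by simpa using hv0⟩
    rw [conE, hW, ← Submodule.map_comp, restrict_comp_emb, Submodule.map_id, h]

/-- An elementary step between `U` and `V` when `U ≤ V ≤ U + span x`. -/
lemma elemStep_of_le (U V : Submodule F (E → F)) (x : E → F)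
    (hUV : U ≤ V) (hVU : V ≤ U ⊔ F ∙ x) : ElemStep V U := by
  by_cases hx : x ∈ U
  · have hVU' : V = U := le_antisymm (by
      rwa [sup_eq_left.mpr ((Submodule.span_singleton_le_iff_mem x U).mpr hx)] at hVU) hUV
    refine elemStep_of_phi U V 0 ?_
    simp [hVU']
  · obtain ⟨ψ, hψx, hψU⟩ := U.exists_dual_map_eq_bot_of_notMem hx inferInstance
    have hker : ∀ u ∈ U, ψ u = 0 := by
      intro u hu
      have : ψ u ∈ U.map ψ := Submodule.mem_map_of_mem hu
      rwa [hψU, Submodule.mem_bot] at this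
    refine elemStep_of_phi U V ψ (le_antisymm ?_ ?_)
    · rintro v ⟨hvV, hv0⟩
      obtain ⟨u, hu, y, hy, rfl⟩ := Submodule.mem_sup.mp (hVU hvV)
      obtain ⟨c, rfl⟩ := Submodule.mem_span_singleton.mp hy
      have hv : ψ (u + c • x) = c * ψ x := by
        simp [hker u hu]
      simp only [SetLike.mem_coe, LinearMap.mem_ker] at hv0
      have hc : c = 0 := by
        rw [hv0] at hv
        rcases mul_eq_zero.mp hv.symm with h | h
        · exact h
        · exact absurd h hψx
      simpa [hc] using hu
    · exact le_inf hUV (fun u hu => LinearMap.mem_ker.mpr (hker u hu))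

variable [Fintype E]

/-- The key chain lemma, by induction on the total codimension budget `N`. -/
lemma chain_lemma (N : ℕ) :
    ∀ (U V S : Submodule F (E → F)), U ≤ S → V ≤ S →
    Module.finrank F S + Module.finrank F S ≤ Module.finrank F U + Module.finrank F V + N →
    ∃ n ≤ N, ∃ f : Fin (n + 1) → Submodule F (E → F),
      f 0 = U ∧ f (Fin.last n) = V ∧
      ∀ i : Fin n, ElemStep (f i.castSucc) (f i.succ) := by
  induction N with
  | zero =>
    intro U V S hUS hVS hbound
    have hU : U = S := Submodule.eq_of_le_of_finrank_le hUS
      (by have := Submodule.finrank_mono hVS; omega)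
    have hV : V = S := Submodule.eq_of_le_of_finrank_le hVS
      (by have := Submodule.finrank_mono hUS; omega)
    exact ⟨0, le_refl 0, fun _ => U, rfl, by rw [hU, hV], fun i => i.elim0⟩
  | succ N ih =>
    intro U V S hUS hVS hbound
    by_cases hU : Module.finrank F U < Module.finrank F S
    · -- grow U by one dimension
      have hUS' : U < S := lt_of_le_of_ne hUS (fun h => by rw [h] at hU; omega)
      obtain ⟨x, hxS, hxU⟩ := SetLike.exists_of_lt hUS'
      set U' : Submodule F (E → F) := U ⊔ F ∙ x with hU'def
      have hU'S : U' ≤ S := sup_le hUS ((Submodule.span_singleton_le_iff_mem x S).mpr hxS)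
      have hUU' : U < U' := lt_of_le_of_ne le_sup_left (fun h => hxU (h ▸
        (le_sup_right (a := U)) (Submodule.mem_span_singleton_self x)))
      have hrk : Module.finrank F U < Module.finrank F U' :=
        Submodule.finrank_lt_finrank_of_lt hUU'
      obtain ⟨n, hn, f, hf0, hfl, hfs⟩ := ih U' V S hU'S hVS (by omega)
      refine ⟨n + 1, by omega, Fin.cons U f, rfl, ?_, ?_⟩
      · rw [← Fin.succ_last, Fin.cons_succ, hfl]
      · intro i
        induction i using Fin.cases with
        | zero =>
          have e1 : (Fin.castSucc (0 : Fin (n + 1))) = 0 := rfl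
          rw [e1, Fin.cons_zero, Fin.cons_succ, hf0]
          exact (elemStep_of_le U U' x le_sup_left (le_refl _)).symm
        | succ j =>
          rw [← Fin.succ_castSucc, Fin.cons_succ, Fin.cons_succ]
          exact hfs j
    · have hUeq : U = S := Submodule.eq_of_le_of_finrank_le hUS (by omega)
      by_cases hV : Module.finrank F V < Module.finrank F S
      · -- grow V by one dimension
        have hVS' : V < S := lt_of_le_of_ne hVS (fun h => by rw [h] at hV; omega)
        obtain ⟨x, hxS, hxV⟩ := SetLike.exists_of_lt hVS'
        set V' : Submodule F (E → F) := V ⊔ F ∙ x with hV'def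
        have hV'S : V' ≤ S := sup_le hVS ((Submodule.span_singleton_le_iff_mem x S).mpr hxS)
        have hVV' : V < V' := lt_of_le_of_ne le_sup_left (fun h => hxV (h ▸
          (le_sup_right (a := V)) (Submodule.mem_span_singleton_self x)))
        have hrk : Module.finrank F V < Module.finrank F V' :=
          Submodule.finrank_lt_finrank_of_lt hVV'
        obtain ⟨n, hn, f, hf0, hfl, hfs⟩ := ih U V' S hUS hV'S (by omega)
        refine ⟨n + 1, by omega, Fin.snoc f V, ?_, ?_, ?_⟩
        · have e0 : ((0 : Fin (n + 2))) = Fin.castSucc (0 : Fin (n + 1)) := rfl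
          rw [e0, Fin.snoc_castSucc, hf0]
        · rw [Fin.snoc_last]
        · intro i
          induction i using Fin.lastCases with
          | last =>
            rw [Fin.succ_last, Fin.snoc_last, Fin.snoc_castSucc, hfl]
            exact elemStep_of_le V V' x le_sup_left (le_refl _)
          | cast j =>
            rw [Fin.succ_castSucc, Fin.snoc_castSucc, Fin.snoc_castSucc]
            exact hfs j
      · have hVeq : V = S := Submodule.eq_of_le_of_finrank_le hVS (by omega)
        exact ⟨0, by omega, fun _ => U, rfl, by rw [hUeq, hVeq], fun i => i.elim0⟩

end Aux

/-- `dist(M₁, M₂) ≤ 2 · pert(M₁, M₂)`: if `M₂` is a rank-(≤ t)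
perturbation of `M₁` (witnessed by generator matrices `A₁`, `A₂` with a common row index
set and `rank (A₁ - A₂) ≤ t`), then `M₁` can be transformed into `M₂` by a sequence of at
most `2t` elementary lifts and elementary projections. -/
theorem stmt2 {F E : Type*} [Field F] [Fintype E]
    (M1 M2 : Submodule F (E → F)) (t : ℕ)
    (R : Type) [Fintype R] (A1 A2 : Matrix R E F)
    (h1 : Submodule.span F (Set.range A1) = M1)
    (h2 : Submodule.span F (Set.range A2) = M2)
    (hrank : (A1 - A2).rank ≤ t) :
    ∃ n ≤ 2 * t, ∃ f : Fin (n + 1) → Submodule F (E → F),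
      f 0 = M1 ∧ f (Fin.last n) = M2 ∧
      ∀ i : Fin n, ElemStep (f i.castSucc) (f i.succ) := by
  classical
  set S : Submodule F (E → F) := M1 ⊔ M2 with hS
  set D : Submodule F (E → F) := Submodule.span F (Set.range (A1 - A2)) with hD
  have hDrank : Module.finrank F D ≤ t := by
    rw [hD]
    rw [Matrix.rank_eq_finrank_span_row] at hrank
    exact hrank
  have hM2le : M2 ≤ M1 ⊔ D := by
    rw [← h2]
    refine Submodule.span_le.mpr ?_
    rintro _ ⟨r, rfl⟩
    have hA : A2 r = A1 r - (A1 - A2) r := by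
      funext e; simp [Matrix.sub_apply]
    rw [hA]
    exact sub_mem (Submodule.mem_sup_left (h1 ▸ Submodule.subset_span ⟨r, rfl⟩))
      (Submodule.mem_sup_right (Submodule.subset_span ⟨r, rfl⟩))
  have hM1le : M1 ≤ M2 ⊔ D := by
    rw [← h1]
    refine Submodule.span_le.mpr ?_
    rintro _ ⟨r, rfl⟩
    have hA : A1 r = A2 r + (A1 - A2) r := by
      funext e; simp [Matrix.sub_apply]
    rw [hA]
    exact add_mem (Submodule.mem_sup_left (h2 ▸ Submodule.subset_span ⟨r, rfl⟩))
      (Submodule.mem_sup_right (Submodule.subset_span ⟨r, rfl⟩))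
  have key : ∀ (P Q : Submodule F (E → F)), P ≤ Q ⊔ D →
      Module.finrank F ↥(Q ⊔ P) ≤ Module.finrank F Q + t := by
    intro P Q hPQ
    have h1' : (Q ⊔ P : Submodule F (E → F)) ≤ Q ⊔ D := sup_le le_sup_left hPQ
    have h2' : Module.finrank F ↥(Q ⊔ P) ≤ Module.finrank F ↥(Q ⊔ D) :=
      Submodule.finrank_mono h1'
    have h3' := Submodule.finrank_sup_add_finrank_inf_eq Q D
    omega
  have hb1 : Module.finrank F S ≤ Module.finrank F M1 + t := by
    have := key M2 M1 hM2le; rwa [hS]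
  have hb2 : Module.finrank F S ≤ Module.finrank F M2 + t := by
    have := key M1 M2 hM1le
    rwa [hS, sup_comm M1 M2]
  obtain ⟨n, hn, f, hf0, hfl, hfs⟩ := chain_lemma (2 * t) M1 M2 S le_sup_left le_sup_right
    (by omega)
  exact ⟨n, hn, f, hf0, hfl, hfs⟩
end
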